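/- Let K be a perfect metrizable Baire space and E any order dense sublattice of B(K) with C_b(K) ⊆ E ⊆ CD_ω(K). Then u(E) − u(E) = u(CD_ω(K)) − u(CD_ω(K)), i.e. E and CD_ω(K) have the same sequential monotone closure in B(K). -/

import Mathlib

open Filter

/-- f is a bounded real function (member of B(K)). -/
def Bdd {K : Type*} (f : K → ℝ) : Prop := ∃ C : ℝ, ∀ x, |f x| ≤ C

/-- The space CD_ω(K). -/
def CDomega (K : Type*) [TopologicalSpace K] : Set (K → ℝ) :=
  {f | Bdd f ∧ ∃ g : K → ℝ, Continuous g ∧ Bdd g ∧ {x | f x ≠ g x}.Countable}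

/-- f is the pointwise limit of an increasing sequence from E, within B(K). -/
def UpLim {K : Type*} (E : Set (K → ℝ)) (f : K → ℝ) : Prop :=
  Bdd f ∧ ∃ u : ℕ → K → ℝ, (∀ n, u n ∈ E) ∧ Monotone u ∧
    ∀ x, Tendsto (fun n => u n x) atTop (nhds (f x))

section Aux

variable {K : Type*} [TopologicalSpace K]

lemma uplim_mono {E F : Set (K → ℝ)} (hEF : E ⊆ F) {f : K → ℝ} (hf : UpLim E f) :
    UpLim F f := by
  obtain ⟨hb, u, hu, hm, ht⟩ := hf
  exact ⟨hb, u, fun n => hEF (hu n), hm, ht⟩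

lemma mem_uplim {E : Set (K → ℝ)} (hE : E ⊆ CDomega K) {f : K → ℝ} (hf : f ∈ E) :
    UpLim E f :=
  ⟨(hE hf).1, fun _ => f, fun _ => hf, monotone_const, fun _ => tendsto_const_nhds⟩

lemma uplim_add {E : Set (K → ℝ)} (hadd : ∀ f ∈ E, ∀ g ∈ E, f + g ∈ E)
    {f g : K → ℝ} (hf : UpLim E f) (hg : UpLim E g) : UpLim E (f + g) := by
  obtain ⟨⟨Cf, hCf⟩, u, hu, hum, hut⟩ := hf
  obtain ⟨⟨Cg, hCg⟩, v, hv, hvm, hvt⟩ := hg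
  refine ⟨⟨Cf + Cg, fun x => ?_⟩, fun n => u n + v n, fun n => hadd _ (hu n) _ (hv n),
    fun m n hmn => add_le_add (hum hmn) (hvm hmn), fun x => ?_⟩
  · calc |(f + g) x| = |f x + g x| := rfl
      _ ≤ |f x| + |g x| := abs_add_le _ _
      _ ≤ Cf + Cg := add_le_add (hCf x) (hCg x)
  · exact ((hut x).add (hvt x))

lemma dense_compl_of_countable [TopologicalSpace.MetrizableSpace K] [BaireSpace K]
    (hperfect : ∀ x : K, ¬ IsOpen ({x} : Set K)) {S : Set K} (hS : S.Countable) :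
    Dense Sᶜ := by
  have : Sᶜ = ⋂ x : S, ({(x : K)}ᶜ) := by
    ext y
    simp only [Set.mem_compl_iff, Set.mem_iInter, Set.mem_singleton_iff]
    constructor
    · rintro hy ⟨x, hx⟩ rfl; exact hy hx
    · intro h hy; exact h ⟨y, hy⟩ rfl
  rw [this]
  haveI := hS.to_subtype
  exact dense_iInter_of_isOpen (fun x => isClosed_singleton.isOpen_compl)
    (fun x => dense_compl_singleton_iff_not_open.mpr (hperfect x))

lemma point_mass_mem {E : Set (K → ℝ)}
    (hsm : ∀ (c : ℝ), ∀ f ∈ E, c • f ∈ E)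
    (hdense : ∀ f : K → ℝ, Bdd f → 0 ≤ f → f ≠ 0 → ∃ g ∈ E, 0 ≤ g ∧ g ≠ 0 ∧ g ≤ f)
    (x : K) {c : ℝ} (hc : 0 < c) {f : K → ℝ}
    (hfx : f x = c) (hfy : ∀ y, y ≠ x → f y = 0) : f ∈ E := by
  have hbdd : Bdd f := by
    refine ⟨c, fun y => ?_⟩
    by_cases h : y = x
    · subst h; rw [hfx, abs_of_pos hc]
    · rw [hfy y h]; simpa using le_of_lt hc
  have hpos : 0 ≤ f := by
    intro y
    by_cases h : y = x
    · subst h; rw [hfx]; simpa using le_of_lt hc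
    · rw [hfy y h]; simp
  have hne : f ≠ 0 := by
    intro h
    have := congrFun h x
    rw [hfx] at this
    exact absurd this (ne_of_gt hc)
  obtain ⟨g, hgE, hg0, hgne, hgf⟩ := hdense f hbdd hpos hne
  have hgy : ∀ y, y ≠ x → g y = 0 := by
    intro y hy
    have h1 : g y ≤ f y := hgf y
    have h2 : (0 : ℝ) ≤ g y := by simpa using hg0 y
    rw [hfy y hy] at h1
    linarith
  have hgx : 0 < g x := by
    rcases lt_or_eq_of_le (show (0:ℝ) ≤ g x by simpa using hg0 x) with h | h
    · exact h
    · exfalso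
      apply hgne
      funext y
      by_cases hy : y = x
      · subst hy; simpa using h.symm
      · simpa using hgy y hy
  have key : (c / g x) • g = f := by
    funext y
    by_cases hy : y = x
    · subst hy
      simp only [Pi.smul_apply, smul_eq_mul, hfx]
      field_simp
    · simp only [Pi.smul_apply, smul_eq_mul, hgy y hy, hfy y hy, mul_zero]
  rw [← key]
  exact hsm _ _ hgE

/-- A nonnegative bounded function with countable support is an increasing limit from E. -/
lemma countable_supp_uplim {E : Set (K → ℝ)}
    (hsm : ∀ (c : ℝ), ∀ f ∈ E, c • f ∈ E)
    (hsupcl : ∀ f ∈ E, ∀ g ∈ E, f ⊔ g ∈ E)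
    (hdense : ∀ f : K → ℝ, Bdd f → 0 ≤ f → f ≠ 0 → ∃ g ∈ E, 0 ≤ g ∧ g ≠ 0 ∧ g ≤ f)
    (hCb : {g : K → ℝ | Continuous g ∧ Bdd g} ⊆ E)
    {h : K → ℝ} (hb : Bdd h) (h0 : (0 : K → ℝ) ≤ h)
    (hcnt : {x | h x ≠ 0}.Countable) : UpLim E h := by
  classical
  have hzeroE : (0 : K → ℝ) ∈ E := hCb ⟨continuous_const, 0, fun x => by simp⟩
  by_cases hne : {x | h x ≠ 0}.Nonempty
  · obtain ⟨e, he⟩ := hcnt.exists_eq_range hne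
    -- u n : sup of point masses at e 0, ..., e (n-1)
    set p : ℕ → K → ℝ := fun k => fun y => if y = e k then h (e k) else 0 with hp
    have hpE : ∀ k, p k ∈ E := by
      intro k
      have h0k : (0:ℝ) ≤ h (e k) := by simpa using h0 (e k)
      rcases lt_or_eq_of_le h0k with hk | hk
      · exact point_mass_mem hsm hdense (e k) hk (by simp [hp])
          (fun y hy => by simp [hp, if_neg hy])
      · have : p k = 0 := by funext y; by_cases hy : y = e k <;> simp [hp, hy, ← hk]
        rw [this]; exact hzeroE
    set u : ℕ → K → ℝ := fun n => Nat.rec (0 : K → ℝ) (fun k uk => uk ⊔ p k) n with hu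
    have huE : ∀ n, u n ∈ E := by
      intro n
      induction n with
      | zero => exact hzeroE
      | succ k ih => exact hsupcl _ ih _ (hpE k)
    have hum : Monotone u := monotone_nat_of_le_succ (fun n => le_sup_left)
    have hple : ∀ k x, p k x ≤ h x := by
      intro k x
      by_cases hx : x = e k
      · subst hx; simp [hp]
      · simp only [hp, if_neg hx]; simpa using h0 x
    have hule : ∀ n x, u n x ≤ h x := by
      intro n x
      induction n with
      | zero => exact h0 x
      | succ k ih => exact max_le ih (hple k x)
    have hu0 : ∀ n x, 0 ≤ u n x := by
      intro n x
      induction n with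
      | zero => exact le_refl 0
      | succ k ih => exact le_trans ih le_sup_left
    refine ⟨hb, u, huE, hum, fun x => ?_⟩
    by_cases hx : h x = 0
    · have : ∀ n, u n x = 0 := fun n => le_antisymm (by rw [← hx]; exact hule n x) (hu0 n x)
      simp only [this, hx]
      exact tendsto_const_nhds
    · have hxS : x ∈ Set.range e := by rw [← he]; exact hx
      obtain ⟨k, hk⟩ := hxS
      have hev : ∀ n, k + 1 ≤ n → u n x = h x := by
        intro n hn
        refine le_antisymm (hule n x) ?_
        have h1 : p k x = h x := by simp [hp, ← hk]
        have h2 : u (k + 1) x ≤ u n x := hum hn x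
        have h3 : h x ≤ u (k + 1) x := by
          rw [← h1]; exact le_sup_right
        linarith
      refine Tendsto.congr' ?_ (tendsto_const_nhds (x := h x))
      filter_upwards [eventually_ge_atTop (k + 1)] with n hn
      exact (hev n hn).symm
  · have hzero : h = 0 := by
      funext x
      by_contra hx
      exact hne ⟨x, hx⟩
    refine ⟨hb, fun _ => 0, fun _ => hzeroE, monotone_const, fun x => ?_⟩
    rw [hzero]
    simpa using tendsto_const_nhds

end Aux

/-- Key decomposition: any element of u(CD_ω) is a difference of elements of u(E). -/
lemma uplim_CD_decomp {K : Type*} [TopologicalSpace K] [TopologicalSpace.MetrizableSpace K]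
    [BaireSpace K] (hperfect : ∀ x : K, ¬ IsOpen ({x} : Set K))
    {E : Set (K → ℝ)}
    (hadd : ∀ f ∈ E, ∀ g ∈ E, f + g ∈ E)
    (hsm : ∀ (c : ℝ), ∀ f ∈ E, c • f ∈ E)
    (hsupcl : ∀ f ∈ E, ∀ g ∈ E, f ⊔ g ∈ E)
    (hdense : ∀ f : K → ℝ, Bdd f → 0 ≤ f → f ≠ 0 → ∃ g ∈ E, 0 ≤ g ∧ g ≠ 0 ∧ g ≤ f)
    (hCb : {g : K → ℝ | Continuous g ∧ Bdd g} ⊆ E)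
    {w : K → ℝ} (hw : UpLim (CDomega K) w) :
    ∃ a b : K → ℝ, UpLim E a ∧ UpLim E b ∧ w = a - b := by
  obtain ⟨⟨C, hC⟩, f, hfCD, hfm, hft⟩ := hw
  choose g hg1 hg2 hg3 using fun n => (hfCD n).2
  set S : Set K := ⋃ n, {x | f n x ≠ g n x} with hSdef
  have hScnt : S.Countable := Set.countable_iUnion hg3
  have hDense : Dense Sᶜ := dense_compl_of_countable hperfect hScnt
  have hSc : ∀ x ∉ S, ∀ n, f n x = g n x := by
    intro x hx n
    by_contra h
    exact hx (Set.mem_iUnion.mpr ⟨n, h⟩)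
  have hfw : ∀ n x, f n x ≤ w x := fun n x =>
    Monotone.ge_of_tendsto (fun m m' hmm' => hfm hmm' x) (hft x) n
  have closed_arg : ∀ (a b : K → ℝ), Continuous a → Continuous b →
      (∀ x ∉ S, a x ≤ b x) → ∀ x, a x ≤ b x := by
    intro a b ha hb hab x
    have h1 : Sᶜ ⊆ {x | a x ≤ b x} := fun y hy => hab y hy
    have h2 : IsClosed {x | a x ≤ b x} := isClosed_le ha hb
    have hx : x ∈ closure (Sᶜ) := by rw [hDense.closure_eq]; trivial
    have := closure_mono h1 hx
    rwa [h2.closure_eq] at this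
  have gmono : ∀ n x, g n x ≤ g (n + 1) x := by
    intro n
    refine closed_arg (g n) (g (n + 1)) (hg1 n) (hg1 (n + 1)) (fun x hx => ?_)
    rw [← hSc x hx n, ← hSc x hx (n + 1)]
    exact hfm (Nat.le_succ n) x
  have gle : ∀ n x, g n x ≤ C := by
    intro n
    refine closed_arg (g n) (fun _ => C) (hg1 n) continuous_const (fun x hx => ?_)
    rw [← hSc x hx n]
    exact le_trans (hfw n x) (abs_le.mp (hC x)).2
  have gmonoseq : ∀ x, Monotone fun n => g n x :=
    fun x => monotone_nat_of_le_succ (fun n => gmono n x)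
  have gbdd : ∀ x, BddAbove (Set.range fun n => g n x) := by
    intro x
    exact ⟨C, by rintro _ ⟨n, rfl⟩; exact gle n x⟩
  set G : K → ℝ := fun x => ⨆ n, g n x with hGdef
  have hGt : ∀ x, Tendsto (fun n => g n x) atTop (nhds (G x)) :=
    fun x => tendsto_atTop_ciSup (gmonoseq x) (gbdd x)
  obtain ⟨C0, hC0⟩ := hg2 0
  have hGub : ∀ x, G x ≤ C := fun x => ciSup_le (fun n => gle n x)
  have hGlb : ∀ x, g 0 x ≤ G x := fun x => le_ciSup (gbdd x) 0
  have hGabs : ∀ x, |G x| ≤ max C C0 := by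
    intro x
    have h1 := hGub x
    have h2 := hGlb x
    have h3 := abs_le.mp (hC0 x)
    rw [abs_le]
    constructor
    · have := le_max_right C C0; linarith [h3.1]
    · have := le_max_left C C0; linarith
  have hGE : UpLim E G :=
    ⟨⟨max C C0, hGabs⟩, g, fun n => hCb ⟨hg1 n, hg2 n⟩,
      monotone_nat_of_le_succ (fun n x => gmono n x), hGt⟩
  have hwG : ∀ x ∉ S, w x = G x := by
    intro x hx
    exact tendsto_nhds_unique (hft x) ((hGt x).congr (fun n => (hSc x hx n).symm))
  -- positive and negative parts of w - G
  set Hp : K → ℝ := fun x => max (w x - G x) 0 with hHpdef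
  set Hm : K → ℝ := fun x => max (G x - w x) 0 with hHmdef
  have habsbd : ∀ (x : K) (t : ℝ), t = w x - G x ∨ t = G x - w x → |max t 0| ≤ C + max C C0 := by
    intro x t ht
    have h1 := abs_le.mp (hC x)
    have h2 := abs_le.mp (hGabs x)
    have hCpos : (0 : ℝ) ≤ C := le_trans (abs_nonneg _) (hC x)
    have hMpos : (0 : ℝ) ≤ max C C0 := le_trans hCpos (le_max_left C C0)
    rw [abs_of_nonneg (le_max_right t 0)]
    rcases ht with rfl | rfl <;> exact max_le (by linarith) (by linarith)
  have hsupp : ∀ x ∉ S, w x - G x = 0 := fun x hx => by rw [hwG x hx]; ring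
  have hHpE : UpLim E Hp := by
    refine countable_supp_uplim hsm hsupcl hdense hCb
      ⟨C + max C C0, fun x => habsbd x _ (Or.inl rfl)⟩
      (fun x => le_max_right (w x - G x) 0) (hScnt.mono ?_)
    intro x hx
    by_contra hxS
    apply hx
    simp only [hHpdef, Set.mem_setOf_eq]
    rw [hsupp x hxS]
    simp
  have hHmE : UpLim E Hm := by
    refine countable_supp_uplim hsm hsupcl hdense hCb
      ⟨C + max C C0, fun x => habsbd x _ (Or.inr rfl)⟩
      (fun x => le_max_right (G x - w x) 0) (hScnt.mono ?_)
    intro x hx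
    by_contra hxS
    apply hx
    simp only [hHmdef, Set.mem_setOf_eq]
    have : G x - w x = 0 := by rw [hwG x hxS]; ring
    rw [this]
    simp
  refine ⟨G + Hp, Hm, uplim_add hadd hGE hHpE, hHmE, ?_⟩
  funext x
  simp only [Pi.sub_apply, Pi.add_apply, hHpdef, hHmdef]
  rcases le_total (w x) (G x) with h | h
  · rw [max_eq_right (by linarith), max_eq_left (by linarith)]; ring
  · rw [max_eq_left (by linarith), max_eq_right (by linarith)]; ring

/-- Let K be a perfect metrizable Baire space and E any order dense
sublattice of B(K) with C_b(K) ⊆ E ⊆ CD_ω(K). Then u(E) − u(E) =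
u(CD_ω(K)) − u(CD_ω(K)). -/
theorem stmt11 {K : Type*} [TopologicalSpace K] [TopologicalSpace.MetrizableSpace K]
    [BaireSpace K] (hperfect : ∀ x : K, ¬ IsOpen ({x} : Set K))
    (E : Set (K → ℝ))
    (hadd : ∀ f ∈ E, ∀ g ∈ E, f + g ∈ E)
    (hsm : ∀ (c : ℝ), ∀ f ∈ E, c • f ∈ E)
    (hsupcl : ∀ f ∈ E, ∀ g ∈ E, f ⊔ g ∈ E)
    (hdense : ∀ f : K → ℝ, Bdd f → 0 ≤ f → f ≠ 0 → ∃ g ∈ E, 0 ≤ g ∧ g ≠ 0 ∧ g ≤ f)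
    (hCb : {g : K → ℝ | Continuous g ∧ Bdd g} ⊆ E)
    (hE : E ⊆ CDomega K) :
    {f : K → ℝ | Bdd f ∧ ∃ u v : K → ℝ, UpLim E u ∧ UpLim E v ∧ f = u - v} =
      {f : K → ℝ | Bdd f ∧ ∃ u v : K → ℝ, UpLim (CDomega K) u ∧ UpLim (CDomega K) v ∧
        f = u - v} := by
  ext f
  simp only [Set.mem_setOf_eq]
  constructor
  · rintro ⟨hb, u, v, hu, hv, rfl⟩
    exact ⟨hb, u, v, uplim_mono hE hu, uplim_mono hE hv, rfl⟩
  · rintro ⟨hb, u, v, hu, hv, rfl⟩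
    obtain ⟨a, b, ha, hbb, hab⟩ := uplim_CD_decomp hperfect hadd hsm hsupcl hdense hCb hu
    obtain ⟨c, d, hc, hd, hcd⟩ := uplim_CD_decomp hperfect hadd hsm hsupcl hdense hCb hv
    refine ⟨hb, a + d, b + c, uplim_add hadd ha hd, uplim_add hadd hbb hc, ?_⟩
    rw [hab, hcd]
    funext x
    simp only [Pi.sub_apply, Pi.add_apply]
    ring
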